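/- Let K ≥ 1, σ > 0, t > 0, and let φ₁, …, φ_K ≥ 0 with Σ_{k=1}^K φ_k = 1. Let μ₁, …, μ_K ∈ ℝ, fix an index j with |μ_k − μ_j| ≤ 4 for all k, and suppose Σ_{k ≠ j} φ_k ≤ (1/2)·exp(−4t). Let X have law Σ_{k=1}^K φ_k·N(μ_k, σ²). Then E[exp(t·|X − μ_j|)] ≤ 3·exp(t²σ²/2). -/
import Mathlib


open MeasureTheory ProbabilityTheory Real
open scoped ENNReal NNReal

lemma exp_mul_gaussianPDFReal (c m : ℝ) {v : ℝ≥0} (hv : v ≠ 0) (x : ℝ) :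
    Real.exp (c * x) * gaussianPDFReal m v x
      = Real.exp (c * m + c ^ 2 * v / 2) * gaussianPDFReal (m + c * v) v x := by
  have hv' : (0 : ℝ) < (v : ℝ) := by positivity
  simp only [gaussianPDFReal]
  rw [mul_comm (Real.exp (c * x)), mul_assoc, mul_assoc, ← Real.exp_add]
  rw [mul_comm (Real.exp _) ((Real.sqrt _)⁻¹ * _), mul_assoc, ← Real.exp_add]
  congr 1
  field_simp
  ring

lemma gaussianReal_withDensity (m : ℝ) {v : ℝ≥0} (hv : v ≠ 0) :
    gaussianReal m v
      = volume.withDensity (fun x => ((gaussianPDFReal m v x).toNNReal : ℝ≥0∞)) := by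
  rw [gaussianReal_of_var_ne_zero m hv]
  rfl

lemma integrable_exp_gaussianReal (c m : ℝ) {v : ℝ≥0} (hv : v ≠ 0) :
    Integrable (fun x => Real.exp (c * x)) (gaussianReal m v) := by
  rw [gaussianReal_withDensity m hv,
    integrable_withDensity_iff_integrable_coe_smul
      (measurable_gaussianPDFReal m v).real_toNNReal]
  have : (fun x => ((((gaussianPDFReal m v x).toNNReal : ℝ≥0) : ℝ)) • Real.exp (c * x))
      = fun x => Real.exp (c * m + c ^ 2 * v / 2) * gaussianPDFReal (m + c * v) v x := by
    funext x
    rw [Real.coe_toNNReal _ (gaussianPDFReal_nonneg m v x), smul_eq_mul, mul_comm,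
      exp_mul_gaussianPDFReal c m hv x]
  rw [this]
  exact (integrable_gaussianPDFReal (m + c * v) v).const_mul _

lemma integral_exp_gaussianReal (c m : ℝ) {v : ℝ≥0} (hv : v ≠ 0) :
    ∫ x, Real.exp (c * x) ∂gaussianReal m v = Real.exp (c * m + c ^ 2 * v / 2) := by
  rw [gaussianReal_withDensity m hv,
    integral_withDensity_eq_integral_smul
      (measurable_gaussianPDFReal m v).real_toNNReal]
  have : (fun x => ((gaussianPDFReal m v x).toNNReal) • Real.exp (c * x))
      = fun x => Real.exp (c * m + c ^ 2 * v / 2) * gaussianPDFReal (m + c * v) v x := by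
    funext x
    rw [NNReal.smul_def, Real.coe_toNNReal _ (gaussianPDFReal_nonneg m v x), smul_eq_mul,
      mul_comm, exp_mul_gaussianPDFReal c m hv x]
  rw [this, integral_const_mul, integral_gaussianPDFReal_eq_one _ hv, mul_one]

lemma integrable_exp_abs_gaussianReal (t m mj : ℝ) {v : ℝ≥0} (hv : v ≠ 0) :
    Integrable (fun x => Real.exp (t * |x - mj|)) (gaussianReal m v) := by
  have hg : Integrable (fun x => Real.exp (-t * mj) * Real.exp (t * x)
      + Real.exp (t * mj) * Real.exp (-t * x)) (gaussianReal m v) :=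
    ((integrable_exp_gaussianReal t m hv).const_mul _).add
      ((integrable_exp_gaussianReal (-t) m hv).const_mul _)
  refine hg.mono' ?_ (Filter.Eventually.of_forall fun x => ?_)
  · exact (Real.continuous_exp.comp (continuous_const.mul
      ((continuous_id.sub continuous_const).abs))).aestronglyMeasurable
  · rw [Real.norm_eq_abs, abs_of_nonneg (Real.exp_nonneg _)]
    rw [← Real.exp_add, ← Real.exp_add]
    rcases abs_cases (x - mj) with ⟨h, _⟩ | ⟨h, _⟩ <;> rw [h]
    · calc Real.exp (t * (x - mj)) = Real.exp (-t * mj + t * x) := by ring_nf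
        _ ≤ _ := le_add_of_nonneg_right (Real.exp_nonneg _)
    · calc Real.exp (t * -(x - mj)) = Real.exp (t * mj + -t * x) := by ring_nf
        _ ≤ _ := le_add_of_nonneg_left (Real.exp_nonneg _)

lemma integral_exp_abs_gaussianReal_le (t m mj : ℝ) (ht : 0 < t) {v : ℝ≥0} (hv : v ≠ 0) :
    ∫ x, Real.exp (t * |x - mj|) ∂gaussianReal m v
      ≤ 2 * Real.exp (t * |m - mj|) * Real.exp (t ^ 2 * v / 2) := by
  have hg : Integrable (fun x => Real.exp (-t * mj) * Real.exp (t * x)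
      + Real.exp (t * mj) * Real.exp (-t * x)) (gaussianReal m v) :=
    ((integrable_exp_gaussianReal t m hv).const_mul _).add
      ((integrable_exp_gaussianReal (-t) m hv).const_mul _)
  have hle : ∫ x, Real.exp (t * |x - mj|) ∂gaussianReal m v
      ≤ ∫ x, (Real.exp (-t * mj) * Real.exp (t * x)
        + Real.exp (t * mj) * Real.exp (-t * x)) ∂gaussianReal m v := by
    refine integral_mono_of_nonneg (Filter.Eventually.of_forall fun x => (Real.exp_nonneg _))
      hg (Filter.Eventually.of_forall fun x => ?_)
    dsimp only
    rw [← Real.exp_add, ← Real.exp_add]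
    rcases abs_cases (x - mj) with ⟨h, _⟩ | ⟨h, _⟩ <;> rw [h]
    · calc Real.exp (t * (x - mj)) = Real.exp (-t * mj + t * x) := by ring_nf
        _ ≤ _ := le_add_of_nonneg_right (Real.exp_nonneg _)
    · calc Real.exp (t * -(x - mj)) = Real.exp (t * mj + -t * x) := by ring_nf
        _ ≤ _ := le_add_of_nonneg_left (Real.exp_nonneg _)
  refine hle.trans ?_
  rw [integral_add ((integrable_exp_gaussianReal t m hv).const_mul _)
    ((integrable_exp_gaussianReal (-t) m hv).const_mul _),
    integral_const_mul, integral_const_mul, integral_exp_gaussianReal t m hv,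
    integral_exp_gaussianReal (-t) m hv]
  have h1 : Real.exp (-t * mj) * Real.exp (t * m + t ^ 2 * v / 2)
      = Real.exp (t * (m - mj)) * Real.exp (t ^ 2 * v / 2) := by
    rw [← Real.exp_add, ← Real.exp_add]; ring_nf
  have h2 : Real.exp (t * mj) * Real.exp (-t * m + (-t) ^ 2 * v / 2)
      = Real.exp (-(t * (m - mj))) * Real.exp (t ^ 2 * v / 2) := by
    rw [← Real.exp_add, ← Real.exp_add]; ring_nf
  rw [h1, h2, ← add_mul]
  have hb : Real.exp (t * (m - mj)) + Real.exp (-(t * (m - mj)))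
      ≤ 2 * Real.exp (t * |m - mj|) := by
    have h3 : t * (m - mj) ≤ t * |m - mj| :=
      mul_le_mul_of_nonneg_left (le_abs_self _) ht.le
    have h4 : -(t * (m - mj)) ≤ t * |m - mj| := by
      rw [← mul_neg]
      exact mul_le_mul_of_nonneg_left (neg_le_abs _) ht.le
    calc _ ≤ Real.exp (t * |m - mj|) + Real.exp (t * |m - mj|) :=
          add_le_add (Real.exp_le_exp.mpr h3) (Real.exp_le_exp.mpr h4)
      _ = 2 * Real.exp (t * |m - mj|) := by ring
  exact mul_le_mul_of_nonneg_right hb (Real.exp_nonneg _)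

/-- MGF bound for the absolute deviation of a Gaussian mixture around a fixed component mean:
if `|μ_k − μ_j| ≤ 4` for all `k` and the off-target weights satisfy
`Σ_{k ≠ j} φ_k ≤ (1/2)·exp(−4t)`, then for `X ~ Σ_k φ_k·N(μ_k, σ²)`,
`E[exp(t·|X − μ_j|)] ≤ 3·exp(t²σ²/2)`. -/
theorem mixture_abs_mgf_bound (K : ℕ) (hK : 1 ≤ K) (σ : ℝ) (hσ : 0 < σ)
    (t : ℝ) (ht : 0 < t) (φ : Fin K → ℝ) (hφ : ∀ k, 0 ≤ φ k) (hφsum : ∑ k, φ k = 1)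
    (μ : Fin K → ℝ) (j : Fin K) (hclose : ∀ k, |μ k - μ j| ≤ 4)
    (hoff : ∑ k ∈ Finset.univ.erase j, φ k ≤ (1 / 2) * Real.exp (-4 * t)) :
    ∫ x, Real.exp (t * |x - μ j|)
        ∂(∑ k, (ENNReal.ofReal (φ k)) • gaussianReal (μ k) ⟨σ ^ 2, sq_nonneg σ⟩) ≤
      3 * Real.exp (t ^ 2 * σ ^ 2 / 2) := by
  set v : ℝ≥0 := ⟨σ ^ 2, sq_nonneg σ⟩ with hvdef
  have hv : v ≠ 0 := by
    intro h
    have : (v : ℝ) = 0 := by rw [h]; simp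
    have : σ ^ 2 = 0 := this
    nlinarith
  have hvr : (v : ℝ) = σ ^ 2 := rfl
  have hint : ∀ k : Fin K, Integrable (fun x => Real.exp (t * |x - μ j|))
      ((ENNReal.ofReal (φ k)) • gaussianReal (μ k) v) := fun k =>
    (integrable_exp_abs_gaussianReal t (μ k) (μ j) hv).smul_measure ENNReal.ofReal_ne_top
  rw [integral_finset_sum_measure (fun k _ => hint k)]
  have hterm : ∀ k : Fin K,
      ∫ x, Real.exp (t * |x - μ j|) ∂((ENNReal.ofReal (φ k)) • gaussianReal (μ k) v)
        = φ k * ∫ x, Real.exp (t * |x - μ j|) ∂gaussianReal (μ k) v := fun k => by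
    rw [integral_smul_measure, ENNReal.toReal_ofReal (hφ k), smul_eq_mul]
  simp only [hterm]
  set E := Real.exp (t ^ 2 * σ ^ 2 / 2) with hE
  have hE0 : 0 < E := Real.exp_pos _
  have hIk : ∀ k : Fin K, ∫ x, Real.exp (t * |x - μ j|) ∂gaussianReal (μ k) v
      ≤ 2 * Real.exp (t * |μ k - μ j|) * E := by
    intro k
    have := integral_exp_abs_gaussianReal_le t (μ k) (μ j) ht hv
    rwa [hvr] at this
  have hIj : ∫ x, Real.exp (t * |x - μ j|) ∂gaussianReal (μ j) v ≤ 2 * E := by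
    have := hIk j
    simpa using this
  have hIne : ∀ k : Fin K, k ≠ j →
      ∫ x, Real.exp (t * |x - μ j|) ∂gaussianReal (μ k) v ≤ 2 * Real.exp (4 * t) * E := by
    intro k _
    refine (hIk k).trans ?_
    have : Real.exp (t * |μ k - μ j|) ≤ Real.exp (4 * t) :=
      Real.exp_le_exp.mpr (by nlinarith [hclose k, abs_nonneg (μ k - μ j)])
    nlinarith
  -- split the sum
  have hsplit : ∑ k, φ k * ∫ x, Real.exp (t * |x - μ j|) ∂gaussianReal (μ k) v
      = φ j * ∫ x, Real.exp (t * |x - μ j|) ∂gaussianReal (μ j) v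
        + ∑ k ∈ Finset.univ.erase j, φ k * ∫ x, Real.exp (t * |x - μ j|) ∂gaussianReal (μ k) v := by
    rw [← Finset.add_sum_erase _ _ (Finset.mem_univ j)]
  rw [hsplit]
  have hInn : ∀ k, 0 ≤ ∫ x, Real.exp (t * |x - μ j|) ∂gaussianReal (μ k) v := fun k =>
    integral_nonneg fun x => Real.exp_nonneg _
  have hφj : φ j ≤ 1 := by
    rw [← hφsum, ← Finset.add_sum_erase _ _ (Finset.mem_univ j)]
    have : 0 ≤ ∑ k ∈ Finset.univ.erase j, φ k := Finset.sum_nonneg fun k _ => hφ k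
    linarith
  have h1 : φ j * ∫ x, Real.exp (t * |x - μ j|) ∂gaussianReal (μ j) v ≤ 2 * E := by
    calc φ j * ∫ x, Real.exp (t * |x - μ j|) ∂gaussianReal (μ j) v
        ≤ 1 * (2 * E) := mul_le_mul hφj hIj (hInn j) one_pos.le
      _ = 2 * E := one_mul _
  have h2 : ∑ k ∈ Finset.univ.erase j, φ k * ∫ x, Real.exp (t * |x - μ j|) ∂gaussianReal (μ k) v
      ≤ E := by
    calc ∑ k ∈ Finset.univ.erase j, φ k * ∫ x, Real.exp (t * |x - μ j|) ∂gaussianReal (μ k) v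
        ≤ ∑ k ∈ Finset.univ.erase j, φ k * (2 * Real.exp (4 * t) * E) := by
          refine Finset.sum_le_sum fun k hk => ?_
          exact mul_le_mul_of_nonneg_left (hIne k (Finset.ne_of_mem_erase hk)) (hφ k)
      _ = (∑ k ∈ Finset.univ.erase j, φ k) * (2 * Real.exp (4 * t) * E) := by
          rw [← Finset.sum_mul]
      _ ≤ (1 / 2) * Real.exp (-4 * t) * (2 * Real.exp (4 * t) * E) := by
          refine mul_le_mul_of_nonneg_right hoff (by positivity)
      _ = E := by
          rw [show (1 / 2 : ℝ) * Real.exp (-4 * t) * (2 * Real.exp (4 * t) * E)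
            = (Real.exp (-4 * t) * Real.exp (4 * t)) * E by ring, ← Real.exp_add]
          simp
  linarith
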